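/- Let a, b, c, d, e be nonzero integers. Define the Laurent polynomials f(x) = x + a + b/x and g(y) = y + c + d/y + e/y^2. Then either the equation z^2 = f(x)^2 + g(y)^2 has infinitely many nontrivial solutions (x, y, z) in the rational function field ℚ(T) with x ≠ 0, y ≠ 0 and f(x)·g(y) ≠ 0, or the equation z^2 = f(x)^2 - g(y)^2 has infinitely many nontrivial solutions (x, y, z) in ℚ(T) with x ≠ 0, y ≠ 0 and f(x)^2 ≠ g(y)^2. -/

import Mathlib

open Polynomial

noncomputable local instance ratFuncRatCharZero : CharZero (RatFunc ℚ) :=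
  charZero_of_injective_algebraMap (algebraMap ℚ (RatFunc ℚ)).injective

/-- Pure algebraic identity behind the construction: with `x = (G²-4B)/(4A)` and
`z = ((G²-4B)² - 4A²G²)/(4A(G²-4B))` one has `z² = (x + A + B/x)² - G²`. -/
lemma alg_id {K : Type*} [Field K] (A B G : K) (h4A : 4 * A ≠ 0)
    (hu : G ^ 2 - 4 * B ≠ 0) :
    (((G ^ 2 - 4 * B) ^ 2 - 4 * A ^ 2 * G ^ 2) / (4 * A * (G ^ 2 - 4 * B))) ^ 2
      = ((G ^ 2 - 4 * B) / (4 * A) + A + B / ((G ^ 2 - 4 * B) / (4 * A))) ^ 2 - G ^ 2 := by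
  have h4 : (4 : K) ≠ 0 := left_ne_zero_of_mul h4A
  have hA : A ≠ 0 := right_ne_zero_of_mul h4A
  field_simp
  ring

/-- Non-vanishing facts about `G = g(X + n)` in `ℚ(X)`. -/
lemma nonvanishing (a b c d e : ℤ) (n : ℕ) (y G : RatFunc ℚ)
    (hy : y = algebraMap ℚ[X] (RatFunc ℚ) (X + (n : ℚ[X])))
    (hG : G = y + (c : RatFunc ℚ) + (d : RatFunc ℚ) / y + (e : RatFunc ℚ) / y ^ 2) :
    y ≠ 0 ∧ G ^ 2 - 4 * (b : RatFunc ℚ) ≠ 0 ∧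
      (G ^ 2 - 4 * (b : RatFunc ℚ)) ^ 2 - 4 * (a : RatFunc ℚ) ^ 2 * G ^ 2 ≠ 0 := by
  have hinj : Function.Injective (algebraMap ℚ[X] (RatFunc ℚ)) :=
    IsFractionRing.injective ℚ[X] (RatFunc ℚ)
  have htnm : (X + (n : ℚ[X]) : ℚ[X]).Monic := by monicity!
  subst hG hy
  set φ := algebraMap ℚ[X] (RatFunc ℚ) with hφdef
  set y : RatFunc ℚ := φ (X + (n : ℚ[X])) with hydef
  have hy0 : y ≠ 0 := RatFunc.algebraMap_ne_zero htnm.ne_zero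
  set G : RatFunc ℚ := y + (c : RatFunc ℚ) + (d : RatFunc ℚ) / y + (e : RatFunc ℚ) / y ^ 2
    with hGdef
  set P : ℚ[X] := (X + (n : ℚ[X])) ^ 3 + (c : ℚ[X]) * (X + (n : ℚ[X])) ^ 2
      + (d : ℚ[X]) * (X + (n : ℚ[X])) + (e : ℚ[X]) with hP
  have hPy : φ P = y ^ 3 + (c : RatFunc ℚ) * y ^ 2 + (d : RatFunc ℚ) * y + (e : RatFunc ℚ) := by
    rw [hP, hydef]
    simp only [map_add, map_mul, map_pow, map_intCast, map_natCast]
  have hGP : φ P = G * y ^ 2 := by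
    rw [hPy, hGdef]
    field_simp [hy0]
  have hy4 : φ ((X + (n : ℚ[X])) ^ 4) = y ^ 4 := by rw [hydef, map_pow]
  refine ⟨hy0, ?_, ?_⟩
  · intro h
    have hN : (P ^ 2 - 4 * (b : ℚ[X]) * (X + (n : ℚ[X])) ^ 4 : ℚ[X]).Monic := by
      rw [hP]; monicity!
    apply hN.ne_zero
    apply hinj
    rw [map_sub, map_pow, map_mul, map_mul, map_intCast, map_ofNat, hGP, hy4, map_zero]
    have : (G * y ^ 2) ^ 2 - 4 * (b : RatFunc ℚ) * y ^ 4
        = (G ^ 2 - 4 * (b : RatFunc ℚ)) * y ^ 4 := by ring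
    rw [this, h, zero_mul]
  · intro h
    have hN : ((P ^ 2 - 4 * (b : ℚ[X]) * (X + (n : ℚ[X])) ^ 4) ^ 2
        - 4 * (a : ℚ[X]) ^ 2 * P ^ 2 * (X + (n : ℚ[X])) ^ 4 : ℚ[X]).Monic := by
      rw [hP]; monicity!
    apply hN.ne_zero
    apply hinj
    simp only [map_sub, map_pow, map_mul, map_intCast, map_ofNat, hGP, hy4, map_zero]
    have : ((G * y ^ 2) ^ 2 - 4 * (b : RatFunc ℚ) * y ^ 4) ^ 2
        - 4 * (a : RatFunc ℚ) ^ 2 * (G * y ^ 2) ^ 2 * y ^ 4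
        = ((G ^ 2 - 4 * (b : RatFunc ℚ)) ^ 2 - 4 * (a : RatFunc ℚ) ^ 2 * G ^ 2) * y ^ 8 := by
      ring
    rw [this, h, zero_mul]

/-- Theorem 1.2 of Zhang–Zargar: for `f(x) = x + a + b/x` and
`g(y) = y + c + d/y + e/y^2` with nonzero integers `a,b,c,d,e`, the equation
`z^2 = f(x)^2 + g(y)^2` or the equation `z^2 = f(x)^2 - g(y)^2` has infinitely
many nontrivial solutions in `ℚ(T)`. -/
theorem stmt1 (a b c d e : ℤ) (ha : a ≠ 0) (hb : b ≠ 0) (hc : c ≠ 0)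
    (hd : d ≠ 0) (he : e ≠ 0) :
    {p : RatFunc ℚ × RatFunc ℚ × RatFunc ℚ |
      p.1 ≠ 0 ∧ p.2.1 ≠ 0 ∧
      (p.1 + a + b / p.1) * (p.2.1 + c + d / p.2.1 + e / p.2.1 ^ 2) ≠ 0 ∧
      p.2.2 ^ 2 = (p.1 + a + b / p.1) ^ 2
        + (p.2.1 + c + d / p.2.1 + e / p.2.1 ^ 2) ^ 2}.Infinite ∨
    {p : RatFunc ℚ × RatFunc ℚ × RatFunc ℚ |
      p.1 ≠ 0 ∧ p.2.1 ≠ 0 ∧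
      (p.1 + a + b / p.1) ^ 2 ≠ (p.2.1 + c + d / p.2.1 + e / p.2.1 ^ 2) ^ 2 ∧
      p.2.2 ^ 2 = (p.1 + a + b / p.1) ^ 2
        - (p.2.1 + c + d / p.2.1 + e / p.2.1 ^ 2) ^ 2}.Infinite := by
  classical
  right
  set K := RatFunc ℚ
  have h4a : (4 : K) * (a : K) ≠ 0 := by
    apply mul_ne_zero
    · norm_num
    · exact_mod_cast Int.cast_ne_zero.mpr ha
  -- the solution family
  let y : ℕ → K := fun n => algebraMap ℚ[X] K (X + (n : ℚ[X]))
  let G : ℕ → K := fun n => y n + (c : K) + (d : K) / y n + (e : K) / (y n) ^ 2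
  let xx : ℕ → K := fun n => ((G n) ^ 2 - 4 * (b : K)) / (4 * (a : K))
  let zz : ℕ → K := fun n =>
    (((G n) ^ 2 - 4 * (b : K)) ^ 2 - 4 * (a : K) ^ 2 * (G n) ^ 2)
      / (4 * (a : K) * ((G n) ^ 2 - 4 * (b : K)))
  have hfacts : ∀ n : ℕ, y n ≠ 0 ∧ (G n) ^ 2 - 4 * (b : K) ≠ 0 ∧
      ((G n) ^ 2 - 4 * (b : K)) ^ 2 - 4 * (a : K) ^ 2 * (G n) ^ 2 ≠ 0 :=
    fun n => nonvanishing a b c d e n (y n) (G n) rfl rfl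
  apply Set.infinite_of_injective_forall_mem
    (f := fun n : ℕ => ((xx n, y n, zz n) : K × K × K))
  case hi =>
    intro m n hmn
    have h2 : y m = y n := congrArg (fun p : K × K × K => p.2.1) hmn
    have h3 : (X + (m : ℚ[X]) : ℚ[X]) = X + (n : ℚ[X]) :=
      IsFractionRing.injective ℚ[X] K h2
    have h4 : (m : ℚ[X]) = (n : ℚ[X]) := by
      have := congrArg (fun p : ℚ[X] => p - X) h3
      simpa using this
    exact_mod_cast h4
  case hf =>
    intro n
    obtain ⟨hy0, hB, hC⟩ := hfacts n
    have hx0 : xx n ≠ 0 := div_ne_zero hB h4a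
    have hz0 : zz n ≠ 0 := div_ne_zero hC (mul_ne_zero h4a hB)
    have hid : (zz n) ^ 2 = (xx n + (a : K) + (b : K) / xx n) ^ 2 - (G n) ^ 2 :=
      alg_id (a : K) (b : K) (G n) h4a hB
    refine ⟨hx0, hy0, ?_, ?_⟩
    · intro heq
      apply hz0
      have hzz : (zz n) ^ 2 = 0 := by rw [hid, heq]; ring
      exact pow_eq_zero_iff (by norm_num) |>.mp hzz
    · exact hid
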